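/- arXiv:math/0510295 — 3 statements merged into one kernel-verified Lean document; each statement's English description precedes it below -/
import Mathlib

section
/- The n−1 matrices Ĥ_1, …, Ĥ_m, H_1^⊥, …, H_p^⊥ (note m + p = n − 1) are linearly independent and span the space of traceless diagonal n×n complex matrices; in particular the Cartan subalgebra of sl(n,ℂ) decomposes as the direct sum of the span of {Ĥ_l} and the span H^⊥ of {H_s^⊥}. -/
open Matrix Finset

/-- The matrix unit `E_{i,j}` (1-based indices), `0` for out-of-range indices. -/
def E (n : ℕ) (i j : ℕ) : Matrix (Fin n) (Fin n) ℂ :=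
  if h : 1 ≤ i ∧ i ≤ n ∧ 1 ≤ j ∧ j ≤ n then
    Matrix.single ⟨i - 1, by omega⟩ ⟨j - 1, by omega⟩ 1
  else 0

lemma E_diag {n u : ℕ} (hu : 1 ≤ u) :
    E n u u = Matrix.diagonal (fun i : Fin n => if (i : ℕ) + 1 = u then (1:ℂ) else 0) := by
  by_cases h : u ≤ n
  · ext i j
    simp only [E, dif_pos (show 1 ≤ u ∧ u ≤ n ∧ 1 ≤ u ∧ u ≤ n from ⟨hu, h, hu, h⟩),
      Matrix.single, Matrix.of_apply, Matrix.diagonal_apply, Fin.ext_iff]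
    split_ifs <;> first | rfl | omega
  · ext i j
    simp only [E, dif_neg (show ¬(1 ≤ u ∧ u ≤ n ∧ 1 ≤ u ∧ u ≤ n) by omega), Matrix.diagonal_apply, Matrix.zero_apply,
      Fin.ext_iff]
    have : ¬((i:ℕ) + 1 = u) := by omega
    split_ifs <;> simp_all

lemma sum_E_diag {n a b : ℕ} (ha : 1 ≤ a) :
    ∑ u ∈ Finset.Icc a b, E n u u =
      Matrix.diagonal (fun i : Fin n => if a ≤ (i:ℕ) + 1 ∧ (i:ℕ) + 1 ≤ b then (1:ℂ) else 0) := by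
  induction b with
  | zero =>
    rw [show Finset.Icc a 0 = ∅ by simp [Finset.Icc_eq_empty_iff]; omega]
    rw [show (fun i : Fin n => if a ≤ (i:ℕ)+1 ∧ (i:ℕ)+1 ≤ 0 then (1:ℂ) else 0) = fun _ => 0 from
      funext fun i => by rw [if_neg]; omega]
    simp
  | succ b ih =>
    by_cases hab : a ≤ b + 1
    · rw [Finset.sum_Icc_succ_top hab, ih, E_diag (by omega), Matrix.diagonal_add]
      refine congrArg Matrix.diagonal (funext fun i => ?_)
      split_ifs <;> first | (exfalso; omega) | norm_num
    · rw [show Finset.Icc a (b+1) = ∅ by simp [Finset.Icc_eq_empty_iff]; omega]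
      rw [show (fun i : Fin n => if a ≤ (i:ℕ)+1 ∧ (i:ℕ)+1 ≤ b+1 then (1:ℂ) else 0) = fun _ => 0
        from funext fun i => by rw [if_neg]; omega]
      simp


/-- The Cartan element `Ĥ_l` of the `l`-th link of the full chain. -/
noncomputable def Hhat (n l : ℕ) : Matrix (Fin n) (Fin n) ℂ :=
  if Odd l then
    ((2 * (l : ℂ) - 1) / (n : ℂ)) • (1 : Matrix (Fin n) (Fin n) ℂ)
      - ∑ u ∈ Finset.Icc 1 (l - 1), E n u u - ∑ u ∈ Finset.Icc (n - l + 1) n, E n u u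
  else
    (-((2 * (l : ℂ) - 1) / (n : ℂ))) • (1 : Matrix (Fin n) (Fin n) ℂ)
      + ∑ u ∈ Finset.Icc 1 l, E n u u + ∑ u ∈ Finset.Icc (n - l + 2) n, E n u u

/-- The element `H_s^⊥` of the complement `H^⊥` of the chain's Cartan carrier. -/
noncomputable def Hperp (n s : ℕ) : Matrix (Fin n) (Fin n) ℂ :=
  ((-1 : ℂ) ^ s) •
    ((-(2 * (s : ℂ) / (n : ℂ))) • (1 : Matrix (Fin n) (Fin n) ℂ)
      + ∑ u ∈ Finset.Icc 1 s, (E n u u + E n (n - u + 1) (n - u + 1)))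


lemma sum_E_rev {n s : ℕ} (hs : s ≤ n) :
    ∑ u ∈ Finset.Icc 1 s, E n (n - u + 1) (n - u + 1) =
      Matrix.diagonal (fun i : Fin n => if n - s + 1 ≤ (i:ℕ) + 1 ∧ (i:ℕ) + 1 ≤ n then (1:ℂ) else 0) := by
  induction s with
  | zero =>
    rw [show Finset.Icc 1 0 = ∅ by simp]
    rw [show (fun i : Fin n => if n - 0 + 1 ≤ (i:ℕ)+1 ∧ (i:ℕ)+1 ≤ n then (1:ℂ) else 0) = fun _ => 0
      from funext fun i => by rw [if_neg]; omega]
    simp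
  | succ s ih =>
    rw [Finset.sum_Icc_succ_top (by omega), ih (by omega), E_diag (by omega),
      Matrix.diagonal_add]
    refine congrArg Matrix.diagonal (funext fun i => ?_)
    split_ifs <;> first | (exfalso; omega) | norm_num

lemma Hperp_zero {n : ℕ} : Hperp n 0 = 0 := by
  simp [Hperp]

lemma I1 {n j : ℕ} (hj : 4*j+3 ≤ n) :
    E n (2*j+1) (2*j+1) = Hhat n (2*j+1) - Hperp n (2*j+1) + ((n:ℂ))⁻¹ • 1 := by
  rw [Hhat, if_pos (Nat.odd_iff.mpr (by omega)), Hperp, Finset.sum_add_distrib,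
    sum_E_diag (by omega), sum_E_diag (by omega), sum_E_diag (by omega), sum_E_rev (by omega),
    E_diag (by omega), Odd.neg_one_pow (Nat.odd_iff.mpr (by omega))]
  have hn0 : (n:ℂ) ≠ 0 := Nat.cast_ne_zero.mpr (by omega)
  ext i k
  by_cases hik : i = k
  · subst hik
    simp only [Matrix.add_apply, Matrix.sub_apply, Matrix.smul_apply, Matrix.diagonal_apply_eq,
      Matrix.one_apply_eq, smul_eq_mul]
    push_cast
    simp only [true_and]
    split_ifs <;> first | (exfalso; omega) | (field_simp; try ring)
  · simp [Matrix.diagonal_apply_ne _ hik, Matrix.one_apply_ne hik, hik]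

lemma I2 {n j : ℕ} (hj : 4*j+4 ≤ n) :
    E n (2*j+2) (2*j+2) = Hhat n (2*j+2) + Hperp n (2*j+1) + ((n:ℂ))⁻¹ • 1 := by
  rw [Hhat, if_neg (by rw [Nat.odd_iff]; omega), Hperp, Finset.sum_add_distrib,
    sum_E_diag (by omega), sum_E_diag (by omega), sum_E_diag (by omega), sum_E_rev (by omega),
    E_diag (by omega), Odd.neg_one_pow (Nat.odd_iff.mpr (by omega))]
  have hn0 : (n:ℂ) ≠ 0 := Nat.cast_ne_zero.mpr (by omega)
  ext i k
  by_cases hik : i = k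
  · subst hik
    simp only [Matrix.add_apply, Matrix.sub_apply, Matrix.smul_apply, Matrix.diagonal_apply_eq,
      Matrix.one_apply_eq, smul_eq_mul]
    push_cast
    simp only [true_and]
    split_ifs <;> first | (exfalso; omega) | (field_simp; try ring)
  · simp [Matrix.diagonal_apply_ne _ hik, Matrix.one_apply_ne hik, hik]

lemma I3 {n j : ℕ} (hn : 2 ≤ n) (hj : 4*j+2 ≤ n) :
    E n (n-2*j) (n-2*j) = - Hhat n (2*j+1) - Hperp n (2*j) + ((n:ℂ))⁻¹ • 1 := by
  rw [Hhat, if_pos (Nat.odd_iff.mpr (by omega)), Hperp, Finset.sum_add_distrib,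
    sum_E_diag (by omega), sum_E_diag (by omega), sum_E_diag (by omega), sum_E_rev (by omega),
    E_diag (by omega), Even.neg_one_pow (by rw [Nat.even_iff]; omega)]
  have hn0 : (n:ℂ) ≠ 0 := Nat.cast_ne_zero.mpr (by omega)
  ext i k
  by_cases hik : i = k
  · subst hik
    simp only [Matrix.add_apply, Matrix.sub_apply, Matrix.neg_apply, Matrix.smul_apply,
      Matrix.diagonal_apply_eq, Matrix.one_apply_eq, smul_eq_mul]
    push_cast
    simp only [true_and]
    split_ifs <;> first | (exfalso; omega) | (field_simp; try ring)
  · simp [Matrix.diagonal_apply_ne _ hik, Matrix.one_apply_ne hik, hik]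

lemma I4 {n j : ℕ} (hj : 4*j+5 ≤ n) :
    E n (n-2*j-1) (n-2*j-1) = Hperp n (2*j+2) - Hhat n (2*j+2) + ((n:ℂ))⁻¹ • 1 := by
  rw [Hhat, if_neg (by rw [Nat.odd_iff]; omega), Hperp, Finset.sum_add_distrib,
    sum_E_diag (by omega), sum_E_diag (by omega), sum_E_rev (by omega),
    E_diag (by omega), Even.neg_one_pow (by rw [Nat.even_iff]; omega)]
  have hn0 : (n:ℂ) ≠ 0 := Nat.cast_ne_zero.mpr (by omega)
  ext i k
  by_cases hik : i = k
  · subst hik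
    simp only [Matrix.add_apply, Matrix.sub_apply, Matrix.smul_apply, Matrix.diagonal_apply_eq,
      Matrix.one_apply_eq, smul_eq_mul]
    push_cast
    simp only [true_and]
    split_ifs <;> first | (exfalso; omega) | (field_simp; try ring)
  · simp [Matrix.diagonal_apply_ne _ hik, Matrix.one_apply_ne hik, hik]

lemma trace_E {n u : ℕ} (h1 : 1 ≤ u) (h2 : u ≤ n) : (E n u u).trace = 1 := by
  rw [E_diag h1, Matrix.trace_diagonal]
  rw [Finset.sum_eq_single (⟨u-1, by omega⟩ : Fin n)]
  · rw [if_pos (by simp; omega)]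
  · intro b _ hb
    rw [if_neg (fun h => hb (Fin.ext (by simp; omega)))]
  · intro h; exact absurd (Finset.mem_univ _) h

lemma trace_sum_E {n a b : ℕ} (ha : 1 ≤ a) (hb : b ≤ n) :
    (∑ u ∈ Finset.Icc a b, E n u u).trace = ((b + 1 - a : ℕ) : ℂ) := by
  rw [Matrix.trace_sum]
  rw [Finset.sum_congr rfl (fun u hu => trace_E (by simp at hu; omega) (by simp at hu; omega))]
  rw [Finset.sum_const, Nat.card_Icc, nsmul_eq_mul, mul_one]

lemma Hhat_isDiag {n l : ℕ} (h1 : 1 ≤ l) : (Hhat n l).IsDiag := by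
  rw [Hhat]
  split_ifs
  · exact ((Matrix.isDiag_one.smul _).sub (by rw [sum_E_diag le_rfl]; exact Matrix.isDiag_diagonal _)).sub
      (by rw [sum_E_diag (by omega)]; exact Matrix.isDiag_diagonal _)
  · exact ((Matrix.isDiag_one.smul _).add (by rw [sum_E_diag le_rfl]; exact Matrix.isDiag_diagonal _)).add
      (by rw [sum_E_diag (by omega)]; exact Matrix.isDiag_diagonal _)

lemma Hperp_isDiag {n s : ℕ} (hs : s ≤ n) : (Hperp n s).IsDiag := by
  rw [Hperp, Finset.sum_add_distrib, sum_E_diag le_rfl, sum_E_rev hs]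
  exact ((Matrix.isDiag_one.smul _).add
    ((Matrix.isDiag_diagonal _).add (Matrix.isDiag_diagonal _))).smul _

lemma Hhat_trace {n l : ℕ} (h1 : 1 ≤ l) (h2 : 2*l ≤ n) : (Hhat n l).trace = 0 := by
  have hn0 : (n:ℂ) ≠ 0 := Nat.cast_ne_zero.mpr (by omega)
  rw [Hhat]
  split_ifs
  · rw [Matrix.trace_sub, Matrix.trace_sub, Matrix.trace_smul, Matrix.trace_one,
      trace_sum_E le_rfl (by omega), trace_sum_E (by omega) le_rfl,
      show l - 1 + 1 - 1 = l - 1 by omega, show n + 1 - (n - l + 1) = l by omega]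
    rw [Nat.cast_sub h1]
    simp only [smul_eq_mul, Fintype.card_fin, Nat.cast_one]
    field_simp
    ring
  · rw [Matrix.trace_add, Matrix.trace_add, Matrix.trace_smul, Matrix.trace_one,
      trace_sum_E le_rfl (by omega), trace_sum_E (by omega) le_rfl,
      show l + 1 - 1 = l by omega, show n + 1 - (n - l + 2) = l - 1 by omega]
    rw [Nat.cast_sub h1]
    simp only [smul_eq_mul, Fintype.card_fin]
    field_simp
    ring

lemma Hperp_trace {n s : ℕ} (h2 : 2*s ≤ n) (hn : 1 ≤ n) : (Hperp n s).trace = 0 := by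
  have hn0 : (n:ℂ) ≠ 0 := Nat.cast_ne_zero.mpr (by omega)
  rw [Hperp, Matrix.trace_smul, Matrix.trace_add, Matrix.trace_smul, Matrix.trace_one,
    Matrix.trace_sum]
  rw [Finset.sum_congr rfl (fun u hu => by
    rw [Matrix.trace_add, trace_E (by simp at hu; omega) (by simp at hu; omega),
      trace_E (by omega) (by simp at hu; omega)])]
  rw [Finset.sum_const, Nat.card_Icc]
  simp only [smul_eq_mul, Fintype.card_fin, Nat.cast_ofNat]
  rw [show s + 1 - 1 = s by omega]
  field_simp
  ring

lemma sum_E_one {n : ℕ} : ∑ u ∈ Finset.Icc 1 n, E n u u = 1 := by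
  rw [sum_E_diag le_rfl,
    show (fun i : Fin n => if 1 ≤ (i:ℕ)+1 ∧ (i:ℕ)+1 ≤ n then (1:ℂ) else 0) = fun _ => 1 from
      funext fun i => if_pos (by omega)]
  exact Matrix.diagonal_one

lemma diagonal_eq_sum {n : ℕ} (d : Fin n → ℂ) :
    Matrix.diagonal d = ∑ i : Fin n, d i • E n ((i:ℕ)+1) ((i:ℕ)+1) := by
  have h : ∀ i : Fin n, d i • E n ((i:ℕ)+1) ((i:ℕ)+1)
      = Matrix.diagonal (fun k => if k = i then d i else 0) := by
    intro i
    rw [E_diag (Nat.le_add_left 1 i), ← Matrix.diagonal_smul]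
    refine congrArg Matrix.diagonal (funext fun k => ?_)
    rw [Pi.smul_apply, smul_eq_mul]
    by_cases hk : k = i
    · subst hk; rw [if_pos rfl, if_pos rfl, mul_one]
    · rw [if_neg hk, if_neg (fun h => hk (Fin.ext (by omega))), mul_zero]
  rw [Finset.sum_congr rfl fun i _ => h i]
  ext a b
  rw [Matrix.sum_apply]
  by_cases hab : a = b
  · subst hab
    simp only [Matrix.diagonal_apply_eq]
    rw [Finset.sum_ite_eq _ a, if_pos (Finset.mem_univ a)]
  · rw [Matrix.diagonal_apply_ne _ hab]
    symm
    apply Finset.sum_eq_zero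
    intro i _
    rw [Matrix.diagonal_apply_ne _ hab]

noncomputable def sigmaMap (n : ℕ) : (Fin n → ℂ) →ₗ[ℂ] ℂ where
  toFun := fun v => ∑ i, v i
  map_add' := fun x y => by simp [Finset.sum_add_distrib]
  map_smul' := fun c x => by simp [Finset.mul_sum]

noncomputable def Vsub (n : ℕ) : Submodule ℂ (Matrix (Fin n) (Fin n) ℂ) :=
  Submodule.map (Matrix.diagonalLinearMap (Fin n) ℂ ℂ) (LinearMap.ker (sigmaMap n))

lemma mem_Vsub_iff {n : ℕ} (A : Matrix (Fin n) (Fin n) ℂ) :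
    A ∈ Vsub n ↔ A.IsDiag ∧ A.trace = 0 := by
  constructor
  · rintro ⟨v, hv, rfl⟩
    refine ⟨Matrix.isDiag_diagonal v, ?_⟩
    show (Matrix.diagonal v).trace = 0
    rw [Matrix.trace_diagonal]
    exact hv
  · rintro ⟨h1, h2⟩
    refine ⟨A.diag, ?_, ?_⟩
    · show (sigmaMap n) A.diag = 0
      exact h2
    · show Matrix.diagonal A.diag = A
      exact h1.diagonal_diag

lemma finrank_Vsub {n : ℕ} (hn : 1 ≤ n) : Module.finrank ℂ (Vsub n) = n - 1 := by
  have hLinj : Function.Injective (Matrix.diagonalLinearMap (Fin n) ℂ ℂ) := by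
    intro a b hab
    exact Matrix.diagonal_injective hab
  have hker : Module.finrank ℂ (LinearMap.ker (sigmaMap n)) = n - 1 := by
    have hsurj : Function.Surjective (sigmaMap n) := by
      intro c
      refine ⟨fun i => if i = (⟨0, by omega⟩ : Fin n) then c else 0, ?_⟩
      show (∑ i, if i = (⟨0, by omega⟩ : Fin n) then c else 0) = c
      rw [Finset.sum_ite_eq' Finset.univ (⟨0, by omega⟩ : Fin n) (fun _ => c)]
      simp
    have h1 := LinearMap.finrank_range_add_finrank_ker (sigmaMap n)
    rw [LinearMap.range_eq_top.mpr hsurj, finrank_top, Module.finrank_self,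
      Module.finrank_fin_fun] at h1
    omega
  rw [← hker]
  exact (LinearEquiv.finrank_eq
    (Submodule.equivMapOfInjective _ hLinj (LinearMap.ker (sigmaMap n)))).symm

theorem stmt_3 (n : ℕ) (hn : 2 ≤ n) (m p : ℕ) (hm : m = n / 2) (hp : p = (n - 1) / 2)
    (f : Fin m ⊕ Fin p → Matrix (Fin n) (Fin n) ℂ)
    (hf : f = Sum.elim (fun l => Hhat n (l.1 + 1)) (fun s => Hperp n (s.1 + 1))) :
    m + p = n - 1 ∧
    LinearIndependent ℂ f ∧
    (Submodule.span ℂ (Set.range f) : Set (Matrix (Fin n) (Fin n) ℂ)) =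
      {A : Matrix (Fin n) (Fin n) ℂ | A.IsDiag ∧ A.trace = 0} ∧
    Submodule.span ℂ (Set.range fun l : Fin m => Hhat n (l.1 + 1)) ⊓
        Submodule.span ℂ (Set.range fun s : Fin p => Hperp n (s.1 + 1)) = ⊥ ∧
    Submodule.span ℂ (Set.range fun l : Fin m => Hhat n (l.1 + 1)) ⊔
        Submodule.span ℂ (Set.range fun s : Fin p => Hperp n (s.1 + 1)) =
      Submodule.span ℂ (Set.range f) := by
  have hn0 : (n:ℂ) ≠ 0 := Nat.cast_ne_zero.mpr (by omega)
  -- every f i lies in Vsub n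
  have hfV : ∀ i, f i ∈ Vsub n := by
    intro i
    rw [hf]
    rcases i with l | s
    · simp only [Sum.elim_inl]
      have hl := l.2
      exact (mem_Vsub_iff _).mpr ⟨Hhat_isDiag (by omega), Hhat_trace (by omega) (by omega)⟩
    · simp only [Sum.elim_inr]
      have hs := s.2
      exact (mem_Vsub_iff _).mpr ⟨Hperp_isDiag (by omega), Hperp_trace (by omega) (by omega)⟩
  have hSV : Submodule.span ℂ (Set.range f) ≤ Vsub n :=
    Submodule.span_le.mpr (by rintro x ⟨i, rfl⟩; exact hfV i)
  -- the enlarged space W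
  set W : Submodule ℂ (Matrix (Fin n) (Fin n) ℂ) :=
    Submodule.span ℂ (Set.range f) ⊔ Submodule.span ℂ {(1 : Matrix (Fin n) (Fin n) ℂ)} with hW
  have honeW : (1 : Matrix (Fin n) (Fin n) ℂ) ∈ W :=
    Submodule.mem_sup_right (Submodule.mem_span_singleton_self _)
  have hHhatW : ∀ l, 1 ≤ l → l ≤ m → Hhat n l ∈ W := by
    intro l h1 h2
    have : Hhat n l = f (Sum.inl ⟨l - 1, by omega⟩) := by
      rw [hf]; simp only [Sum.elim_inl]
      show Hhat n l = Hhat n (l - 1 + 1)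
      rw [Nat.sub_add_cancel h1]
    rw [this]
    exact Submodule.mem_sup_left (Submodule.subset_span ⟨_, rfl⟩)
  have hHperpW : ∀ s, s ≤ p → Hperp n s ∈ W := by
    intro s h2
    rcases Nat.eq_zero_or_pos s with rfl | h1
    · rw [Hperp_zero]; exact zero_mem _
    · have : Hperp n s = f (Sum.inr ⟨s - 1, by omega⟩) := by
        rw [hf]; simp only [Sum.elim_inr]
        show Hperp n s = Hperp n (s - 1 + 1)
        rw [Nat.sub_add_cancel h1]
      rw [this]
      exact Submodule.mem_sup_left (Submodule.subset_span ⟨_, rfl⟩)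
  -- coverage of matrix units except one index
  have cov : ∀ u, 1 ≤ u → u ≤ n →
      ((n % 2 = 0 ∧ m % 2 = 1 ∧ u ≠ m) ∨ (¬(n % 2 = 0 ∧ m % 2 = 1) ∧ u ≠ m + 1)) →
      E n u u ∈ W := by
    intro u h1 h2 hu0
    rcases Nat.even_or_odd u with he | ho
    · have he' : u % 2 = 0 := Nat.even_iff.mp he
      by_cases hbu : 2*u ≤ n
      · obtain ⟨j, rfl⟩ : ∃ j, u = 2*j+2 := ⟨(u-2)/2, by omega⟩
        rw [I2 (by omega)]
        exact add_mem (add_mem (hHhatW _ (by omega) (by omega)) (hHperpW _ (by omega)))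
          (Submodule.smul_mem _ _ honeW)
      · by_cases hnpar : n % 2 = 0
        · obtain ⟨j, hj, hj2⟩ : ∃ j, u = n - 2*j ∧ 4*j + 2 ≤ n := ⟨(n-u)/2, by omega⟩
          rw [hj, I3 hn (by omega)]
          exact add_mem (sub_mem (neg_mem (hHhatW _ (by omega) (by omega)))
            (hHperpW _ (by omega))) (Submodule.smul_mem _ _ honeW)
        · obtain ⟨j, hj, hj2⟩ : ∃ j, u = n - 2*j - 1 ∧ 4*j + 5 ≤ n := ⟨(n-u-1)/2, by omega⟩
          rw [hj, I4 (by omega)]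
          exact add_mem (sub_mem (hHperpW _ (by omega)) (hHhatW _ (by omega) (by omega)))
            (Submodule.smul_mem _ _ honeW)
    · have ho' : u % 2 = 1 := Nat.odd_iff.mp ho
      by_cases hbu : 2*u + 1 ≤ n
      · obtain ⟨j, rfl⟩ : ∃ j, u = 2*j+1 := ⟨(u-1)/2, by omega⟩
        rw [I1 (by omega)]
        exact add_mem (sub_mem (hHhatW _ (by omega) (by omega)) (hHperpW _ (by omega)))
          (Submodule.smul_mem _ _ honeW)
      · by_cases hnpar : n % 2 = 0
        · obtain ⟨j, hj, hj2⟩ : ∃ j, u = n - 2*j - 1 ∧ 4*j + 5 ≤ n := ⟨(n-u-1)/2, by omega⟩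
          rw [hj, I4 (by omega)]
          exact add_mem (sub_mem (hHperpW _ (by omega)) (hHhatW _ (by omega) (by omega)))
            (Submodule.smul_mem _ _ honeW)
        · obtain ⟨j, hj, hj2⟩ : ∃ j, u = n - 2*j ∧ 4*j + 2 ≤ n := ⟨(n-u)/2, by omega⟩
          rw [hj, I3 hn (by omega)]
          exact add_mem (sub_mem (neg_mem (hHhatW _ (by omega) (by omega)))
            (hHperpW _ (by omega))) (Submodule.smul_mem _ _ honeW)
  have hEW : ∀ u, 1 ≤ u → u ≤ n → E n u u ∈ W := by
    intro u h1 h2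
    by_cases hu : (n % 2 = 0 ∧ m % 2 = 1 ∧ u ≠ m) ∨ (¬(n % 2 = 0 ∧ m % 2 = 1) ∧ u ≠ m + 1)
    · exact cov u h1 h2 hu
    · -- u is the missing index u0
      have h12 : 1 ≤ u ∧ u ≤ n := ⟨h1, h2⟩
      have hmem : u ∈ Finset.Icc 1 n := Finset.mem_Icc.mpr h12
      have hsum := sum_E_one (n := n)
      rw [← Finset.add_sum_erase _ _ hmem] at hsum
      have hEu : E n u u = 1 - ∑ v ∈ (Finset.Icc 1 n).erase u, E n v v := by
        rw [← hsum]; abel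
      rw [hEu]
      refine sub_mem honeW (Submodule.sum_mem _ (fun v hv => ?_))
      have hv1 := Finset.mem_erase.mp hv
      have hv2 := Finset.mem_Icc.mp hv1.2
      refine cov v hv2.1 hv2.2 ?_
      have hvne := hv1.1
      by_cases hc : n % 2 = 0 ∧ m % 2 = 1
      · left
        refine ⟨hc.1, hc.2, ?_⟩
        intro hvm
        apply hvne
        subst hvm
        omega
      · right
        refine ⟨hc, ?_⟩
        intro hvm
        apply hvne
        subst hvm
        omega
  have hdiagW : ∀ A : Matrix (Fin n) (Fin n) ℂ, A.IsDiag → A ∈ W := by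
    intro A hA
    rw [← hA.diagonal_diag, diagonal_eq_sum]
    refine Submodule.sum_mem _ fun i _ => Submodule.smul_mem _ _ ?_
    have := i.2
    exact hEW _ (by omega) (by omega)
  have hVS : Vsub n ≤ Submodule.span ℂ (Set.range f) := by
    intro A hA
    obtain ⟨hAd, hAt⟩ := (mem_Vsub_iff A).mp hA
    rcases Submodule.mem_sup.mp (hdiagW A hAd) with ⟨x, hx, y, hy, hxy⟩
    obtain ⟨c, rfl⟩ := Submodule.mem_span_singleton.mp hy
    have htx : x.trace = 0 := ((mem_Vsub_iff x).mp (hSV hx)).2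
    have hc0 : c = 0 := by
      have h := congrArg Matrix.trace hxy
      rw [Matrix.trace_add, htx, Matrix.trace_smul, Matrix.trace_one, hAt, zero_add,
        Fintype.card_fin, smul_eq_mul] at h
      exact (mul_eq_zero.mp h).resolve_right hn0
    rw [← hxy, hc0, zero_smul, add_zero]
    exact hx
  have hSVeq : Submodule.span ℂ (Set.range f) = Vsub n := le_antisymm hSV hVS
  have hLI : LinearIndependent ℂ f := by
    rw [linearIndependent_iff_card_eq_finrank_span, Set.finrank, hSVeq, finrank_Vsub (by omega)]
    simp only [Fintype.card_sum, Fintype.card_fin]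
    omega
  refine ⟨by omega, hLI, ?_, ?_, ?_⟩
  · rw [hSVeq]
    ext A
    simp only [SetLike.mem_coe, Set.mem_setOf_eq]
    exact mem_Vsub_iff A
  · have hLI' := hLI
    rw [hf] at hLI'
    have h3 := (linearIndependent_sum.mp hLI').2.2
    rw [Sum.elim_comp_inl, Sum.elim_comp_inr] at h3
    exact disjoint_iff.mp h3
  · rw [hf, Set.Sum.elim_range, Submodule.span_union]
end

section
/- For every l with 1 ≤ l ≤ m and every k with l < k ≤ n−l, the constituent root vectors of the l-th link have the following weights under Ĥ_l: if l is odd then [Ĥ_l, E_{l,k}] = 0 and [Ĥ_l, E_{k,n−l+1}] = E_{k,n−l+1}; if l is even then [Ĥ_l, E_{l,k}] = E_{l,k} and [Ĥ_l, E_{k,n−l+1}] = 0. -/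
open Matrix Finset

lemma Emul (n u i j : ℕ) (hu : 1 ≤ u) (hu' : u ≤ n) (hi : 1 ≤ i) (hi' : i ≤ n)
    (hj : 1 ≤ j) (hj' : j ≤ n) :
    E n u u * E n i j = if u = i then E n i j else 0 := by
  rw [E, E, dif_pos ⟨hu, hu', hu, hu'⟩, dif_pos ⟨hi, hi', hj, hj'⟩]
  by_cases h : u = i
  · subst h
    rw [if_pos rfl, Matrix.single_mul_single_same, one_mul]
  · rw [if_neg h, Matrix.single_mul_single_of_ne]
    intro hc
    apply h
    have := Fin.mk.injEq .. ▸ hc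
    omega

lemma mulE (n u i j : ℕ) (hu : 1 ≤ u) (hu' : u ≤ n) (hi : 1 ≤ i) (hi' : i ≤ n)
    (hj : 1 ≤ j) (hj' : j ≤ n) :
    E n i j * E n u u = if j = u then E n i j else 0 := by
  rw [E, E, dif_pos ⟨hi, hi', hj, hj'⟩, dif_pos ⟨hu, hu', hu, hu'⟩]
  by_cases h : j = u
  · subst h
    rw [if_pos rfl, Matrix.single_mul_single_same, one_mul]
  · rw [if_neg h, Matrix.single_mul_single_of_ne]
    intro hc
    apply h
    have := Fin.mk.injEq .. ▸ hc
    omega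

lemma sum_mul_E (n a b i j : ℕ) (ha : 1 ≤ a) (hb : b ≤ n) (hi : 1 ≤ i) (hi' : i ≤ n)
    (hj : 1 ≤ j) (hj' : j ≤ n) :
    (∑ u ∈ Finset.Icc a b, E n u u) * E n i j = if i ∈ Finset.Icc a b then E n i j else 0 := by
  rw [Finset.sum_mul,
    Finset.sum_congr rfl (fun u hu => by
      have := Finset.mem_Icc.mp hu
      exact Emul n u i j (ha.trans this.1) (this.2.trans hb) hi hi' hj hj')]
  exact Finset.sum_ite_eq' _ i _

lemma E_mul_sum (n a b i j : ℕ) (ha : 1 ≤ a) (hb : b ≤ n) (hi : 1 ≤ i) (hi' : i ≤ n)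
    (hj : 1 ≤ j) (hj' : j ≤ n) :
    E n i j * (∑ u ∈ Finset.Icc a b, E n u u) = if j ∈ Finset.Icc a b then E n i j else 0 := by
  rw [Finset.mul_sum,
    Finset.sum_congr rfl (fun u hu => by
      have := Finset.mem_Icc.mp hu
      exact mulE n u i j (ha.trans this.1) (this.2.trans hb) hi hi' hj hj')]
  exact Finset.sum_ite_eq _ j _

theorem stmt_5 (n : ℕ) (hn : 2 ≤ n) (m : ℕ) (hm : m = n / 2)
    (l : ℕ) (hl1 : 1 ≤ l) (hl2 : l ≤ m) (k : ℕ) (hk1 : l < k) (hk2 : k ≤ n - l) :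
    (Odd l →
      Hhat n l * E n l k - E n l k * Hhat n l = 0 ∧
      Hhat n l * E n k (n - l + 1) - E n k (n - l + 1) * Hhat n l = E n k (n - l + 1)) ∧
    (Even l →
      Hhat n l * E n l k - E n l k * Hhat n l = E n l k ∧
      Hhat n l * E n k (n - l + 1) - E n k (n - l + 1) * Hhat n l = 0) := by
  have h2l : 2 * l ≤ n := by omega
  constructor
  · intro hodd
    rw [Hhat, if_pos hodd]
    constructor
    · rw [sub_mul, sub_mul, mul_sub, mul_sub, smul_mul_assoc, one_mul, mul_smul_comm, mul_one,
        sum_mul_E n 1 (l-1) l k (by omega) (by omega) (by omega) (by omega) (by omega) (by omega),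
        sum_mul_E n (n-l+1) n l k (by omega) (by omega) (by omega) (by omega) (by omega) (by omega),
        E_mul_sum n 1 (l-1) l k (by omega) (by omega) (by omega) (by omega) (by omega) (by omega),
        E_mul_sum n (n-l+1) n l k (by omega) (by omega) (by omega) (by omega) (by omega) (by omega)]
      simp only [Finset.mem_Icc]
      rw [if_neg (by omega), if_neg (by omega), if_neg (by omega), if_neg (by omega)]
      simp
    · rw [sub_mul, sub_mul, mul_sub, mul_sub, smul_mul_assoc, one_mul, mul_smul_comm, mul_one,
        sum_mul_E n 1 (l-1) k (n-l+1) (by omega) (by omega) (by omega) (by omega) (by omega) (by omega),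
        sum_mul_E n (n-l+1) n k (n-l+1) (by omega) (by omega) (by omega) (by omega) (by omega) (by omega),
        E_mul_sum n 1 (l-1) k (n-l+1) (by omega) (by omega) (by omega) (by omega) (by omega) (by omega),
        E_mul_sum n (n-l+1) n k (n-l+1) (by omega) (by omega) (by omega) (by omega) (by omega) (by omega)]
      simp only [Finset.mem_Icc]
      rw [if_neg (by omega), if_neg (by omega), if_neg (by omega), if_pos (by omega)]
      abel
  · intro heven
    rw [Hhat, if_neg (Nat.not_odd_iff_even.mpr heven)]
    constructor
    · rw [add_mul, add_mul, mul_add, mul_add, smul_mul_assoc, one_mul, mul_smul_comm, mul_one,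
        sum_mul_E n 1 l l k (by omega) (by omega) (by omega) (by omega) (by omega) (by omega),
        sum_mul_E n (n-l+2) n l k (by omega) (by omega) (by omega) (by omega) (by omega) (by omega),
        E_mul_sum n 1 l l k (by omega) (by omega) (by omega) (by omega) (by omega) (by omega),
        E_mul_sum n (n-l+2) n l k (by omega) (by omega) (by omega) (by omega) (by omega) (by omega)]
      simp only [Finset.mem_Icc]
      rw [if_pos (by omega), if_neg (by omega), if_neg (by omega), if_neg (by omega)]
      abel
    · rw [add_mul, add_mul, mul_add, mul_add, smul_mul_assoc, one_mul, mul_smul_comm, mul_one,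
        sum_mul_E n 1 l k (n-l+1) (by omega) (by omega) (by omega) (by omega) (by omega) (by omega),
        sum_mul_E n (n-l+2) n k (n-l+1) (by omega) (by omega) (by omega) (by omega) (by omega) (by omega),
        E_mul_sum n 1 l k (n-l+1) (by omega) (by omega) (by omega) (by omega) (by omega) (by omega),
        E_mul_sum n (n-l+2) n k (n-l+1) (by omega) (by omega) (by omega) (by omega) (by omega) (by omega)]
      simp only [Finset.mem_Icc]
      rw [if_neg (by omega), if_neg (by omega), if_neg (by omega), if_neg (by omega)]
      simp
end

section
/- For every even t with 2 ≤ t ≤ p and t + 1 ≤ m and every s with 1 ≤ s ≤ p, the even external coordinate satisfies [ι(H_s^⊥), Ê_t] = δ_{s,t}·Ê_t in the universal enveloping algebra U of gl(n,ℂ). -/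
open Matrix Finset

attribute [local instance 100] LieRing.ofAssociativeRing

/-- The universal enveloping algebra `U(gl(n,ℂ))`. -/
abbrev Ugl (n : ℕ) := UniversalEnvelopingAlgebra ℂ (Matrix (Fin n) (Fin n) ℂ)

/-- The canonical embedding `ι : gl(n,ℂ) → U(gl(n,ℂ))`. -/
noncomputable def ι (n : ℕ) (A : Matrix (Fin n) (Fin n) ℂ) : Ugl n :=
  UniversalEnvelopingAlgebra.ι ℂ A

/-- The even external coordinate `Ê_s` (for even `s`). -/
noncomputable def Ehat (n s : ℕ) : Ugl n :=
  ι n (E n (n - s + 1) (n - s)) + ι n (Hhat n (s + 1) - Hhat n s) * ι n (E n s (n - s))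
    + ι n (E n s (s + 1))

section Aux

lemma diag_comm {n : ℕ} (f : Fin n → ℂ) (i j : Fin n) :
    Matrix.diagonal f * Matrix.single i j (1:ℂ)
      - Matrix.single i j (1:ℂ) * Matrix.diagonal f
    = (f i - f j) • Matrix.single i j (1:ℂ) := by
  ext k l
  simp only [Matrix.sub_apply, Matrix.smul_apply, Matrix.diagonal_mul, Matrix.mul_diagonal,
    Matrix.single, Matrix.of_apply, smul_eq_mul]
  by_cases hk : i = k <;> by_cases hl : j = l <;> simp [hk, hl]

lemma sum_Euu (n a b : ℕ) (ha : 1 ≤ a) (hb : b ≤ n) :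
    ∑ u ∈ Finset.Icc a b, E n u u
      = Matrix.diagonal (fun k : Fin n => if a ≤ k.1 + 1 ∧ k.1 + 1 ≤ b then (1:ℂ) else 0) := by
  ext k l
  rw [Matrix.sum_apply]
  have key : ∀ u ∈ Finset.Icc a b,
      E n u u k l = if u = k.1 + 1 then (if k = l then (1:ℂ) else 0) else 0 := by
    intro u hu
    simp only [Finset.mem_Icc] at hu
    rw [E, dif_pos ⟨by omega, by omega, by omega, by omega⟩]
    simp only [Matrix.single, Matrix.of_apply, Fin.ext_iff]
    split_ifs <;> simp_all <;> omega
  rw [Finset.sum_congr rfl key,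
    Finset.sum_ite_eq' (Finset.Icc a b) (k.1+1) (fun _ => if k = l then (1:ℂ) else 0)]
  simp only [Matrix.diagonal, Matrix.of_apply, Finset.mem_Icc]
  split_ifs <;> simp_all <;> omega

lemma sum_Err (n s : ℕ) (hs : s ≤ n) :
    ∑ u ∈ Finset.Icc 1 s, E n (n - u + 1) (n - u + 1)
      = Matrix.diagonal (fun k : Fin n => if n - s + 1 ≤ k.1 + 1 then (1:ℂ) else 0) := by
  ext k l
  rw [Matrix.sum_apply]
  have key : ∀ u ∈ Finset.Icc 1 s,
      E n (n-u+1) (n-u+1) k l = if u = n - k.1 then (if k = l then (1:ℂ) else 0) else 0 := by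
    intro u hu
    simp only [Finset.mem_Icc] at hu
    rw [E, dif_pos ⟨by omega, by omega, by omega, by omega⟩]
    simp only [Matrix.single, Matrix.of_apply, Fin.ext_iff]
    have hk := k.2
    split_ifs <;> simp_all <;> omega
  rw [Finset.sum_congr rfl key,
    Finset.sum_ite_eq' (Finset.Icc 1 s) (n - k.1) (fun _ => if k = l then (1:ℂ) else 0)]
  simp only [Matrix.diagonal, Matrix.of_apply, Finset.mem_Icc]
  have hk := k.2
  split_ifs <;> simp_all <;> omega

noncomputable def fperp (n s : ℕ) : Fin n → ℂ := fun k =>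
  (-1:ℂ)^s * (-(2*(s:ℂ)/(n:ℂ)) + (if k.1+1 ≤ s then 1 else 0)
    + (if n - s + 1 ≤ k.1 + 1 then 1 else 0))

lemma Hperp_diag (n s : ℕ) (hs : s ≤ n) :
    Hperp n s = Matrix.diagonal (fperp n s) := by
  rw [Hperp, Finset.sum_add_distrib, sum_Euu n 1 s le_rfl hs, sum_Err n s hs]
  ext k l
  simp only [Matrix.smul_apply, Matrix.add_apply, Matrix.diagonal_apply, Matrix.one_apply,
    fperp, smul_eq_mul]
  by_cases h : k = l <;> simp [h] <;> ring

lemma Hhat_isDiag_s9 (n l : ℕ) (hl : l ≤ n) : ∃ f, Hhat n l = Matrix.diagonal f := by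
  rw [Hhat]
  split_ifs
  · refine ⟨fun k => ((2*(l:ℂ)-1)/(n:ℂ)) - (if 1 ≤ k.1+1 ∧ k.1+1 ≤ l-1 then 1 else 0)
      - (if n-l+1 ≤ k.1+1 ∧ k.1+1 ≤ n then 1 else 0), ?_⟩
    rw [sum_Euu n 1 (l-1) le_rfl (by omega), sum_Euu n (n-l+1) n (by omega) le_rfl]
    ext k l'
    simp only [Matrix.smul_apply, Matrix.sub_apply, Matrix.diagonal_apply, Matrix.one_apply,
      smul_eq_mul]
    by_cases h : k = l' <;> simp [h]
  · refine ⟨fun k => (-((2*(l:ℂ)-1)/(n:ℂ))) + (if 1 ≤ k.1+1 ∧ k.1+1 ≤ l then 1 else 0)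
      + (if n-l+2 ≤ k.1+1 ∧ k.1+1 ≤ n then 1 else 0), ?_⟩
    rw [sum_Euu n 1 l le_rfl hl, sum_Euu n (n-l+2) n (by omega) le_rfl]
    ext k l'
    simp only [Matrix.smul_apply, Matrix.add_apply, Matrix.diagonal_apply, Matrix.one_apply,
      smul_eq_mul]
    by_cases h : k = l' <;> simp [h]

lemma iota_comm (n : ℕ) (A B : Matrix (Fin n) (Fin n) ℂ) :
    ι n A * ι n B - ι n B * ι n A = ι n (A * B - B * A) := by
  have h := (UniversalEnvelopingAlgebra.ι ℂ (L := Matrix (Fin n) (Fin n) ℂ)).map_lie A B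
  simp only [Ring.lie_def] at h
  simp only [ι]
  exact h.symm

lemma commE (n s i j : ℕ) (hs : s ≤ n) (hi1 : 1 ≤ i) (hi2 : i ≤ n) (hj1 : 1 ≤ j) (hj2 : j ≤ n) :
    Hperp n s * E n i j - E n i j * Hperp n s
      = (fperp n s ⟨i-1, by omega⟩ - fperp n s ⟨j-1, by omega⟩) • E n i j := by
  rw [Hperp_diag n s hs, E, dif_pos ⟨hi1, hi2, hj1, hj2⟩]
  exact diag_comm _ _ _

end Aux

theorem stmt_9 (n : ℕ) (hn : 2 ≤ n) (m p : ℕ) (hm : m = n / 2) (hp : p = (n - 1) / 2)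
    (t : ℕ) (ht0 : Even t) (ht1 : 2 ≤ t) (ht2 : t ≤ p) (htm : t + 1 ≤ m)
    (s : ℕ) (hs1 : 1 ≤ s) (hs2 : s ≤ p) :
    ι n (Hperp n s) * Ehat n t - Ehat n t * ι n (Hperp n s) =
      (if s = t then (1 : ℂ) else 0) • Ehat n t := by
  subst hm hp
  have hs' : 2 * s + 1 ≤ n := by omega
  have ht' : 2 * t + 1 ≤ n := by omega
  have htm' : 2 * (t + 1) ≤ n := by omega
  set δ : ℂ := if s = t then (1 : ℂ) else 0 with hδ
  have hpow : ((-1 : ℂ)) ^ t = 1 := ht0.neg_one_pow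
  -- scalar computations
  have key : ∀ i j : ℕ, 1 ≤ i → i ≤ n → 1 ≤ j → j ≤ n →
      ((if i ≤ s then (1:ℂ) else 0) + (if n - s + 1 ≤ i then (1:ℂ) else 0)
        = if t ≤ s then (1:ℂ) else 0) →
      ((if j ≤ s then (1:ℂ) else 0) + (if n - s + 1 ≤ j then (1:ℂ) else 0)
        = if t < s then (1:ℂ) else 0) →
      Hperp n s * E n i j - E n i j * Hperp n s = δ • E n i j := by
    intro i j hi1 hi2 hj1 hj2 c1 c2
    rw [commE n s i j (by omega) hi1 hi2 hj1 hj2]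
    congr 1
    simp only [fperp]
    have e1 : (⟨i-1, by omega⟩ : Fin n).1 + 1 = i := by simp; omega
    have e2 : (⟨j-1, by omega⟩ : Fin n).1 + 1 = j := by simp; omega
    rw [e1, e2]
    rcases lt_trichotomy s t with h | h | h
    · rw [if_neg (show ¬ t ≤ s by omega)] at c1
      rw [if_neg (show ¬ t < s by omega)] at c2
      rw [hδ, if_neg (show ¬ s = t by omega)]
      linear_combination ((-1:ℂ))^s * c1 - ((-1:ℂ))^s * c2
    · rw [if_pos (show t ≤ s by omega)] at c1
      rw [if_neg (show ¬ t < s by omega)] at c2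
      rw [hδ, if_pos (show s = t from h)]
      have hpow' : ((-1:ℂ))^s = 1 := by rw [h]; exact hpow
      linear_combination ((-1:ℂ))^s * c1 - ((-1:ℂ))^s * c2 + hpow'
    · rw [if_pos (show t ≤ s by omega)] at c1
      rw [if_pos (show t < s from h)] at c2
      rw [hδ, if_neg (show ¬ s = t by omega)]
      linear_combination ((-1:ℂ))^s * c1 - ((-1:ℂ))^s * c2
  have F1 := key (n - t + 1) (n - t) (by omega) (by omega) (by omega) (by omega)
    (by split_ifs <;> first | (exfalso; omega) | norm_num)
    (by split_ifs <;> first | (exfalso; omega) | norm_num)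
  have F2 := key t (n - t) (by omega) (by omega) (by omega) (by omega)
    (by split_ifs <;> first | (exfalso; omega) | norm_num)
    (by split_ifs <;> first | (exfalso; omega) | norm_num)
  have F3 := key t (t + 1) (by omega) (by omega) (by omega) (by omega)
    (by split_ifs <;> first | (exfalso; omega) | norm_num)
    (by split_ifs <;> first | (exfalso; omega) | norm_num)
  -- commuting with the Hhat part
  obtain ⟨f1, e1⟩ := Hhat_isDiag_s9 n (t+1) (by omega)
  obtain ⟨f2, e2⟩ := Hhat_isDiag_s9 n t (by omega)
  have F4 : Hperp n s * (Hhat n (t+1) - Hhat n t) = (Hhat n (t+1) - Hhat n t) * Hperp n s := by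
    rw [Hperp_diag n s (by omega), e1, e2, mul_sub, sub_mul,
      Matrix.diagonal_mul_diagonal, Matrix.diagonal_mul_diagonal,
      Matrix.diagonal_mul_diagonal, Matrix.diagonal_mul_diagonal]
    ext k l
    by_cases h : k = l <;> simp [h, Matrix.diagonal_apply, Matrix.sub_apply] <;> ring
  -- lift to the enveloping algebra
  set X := ι n (Hperp n s) with hX
  have G1 : X * ι n (E n (n-t+1) (n-t)) - ι n (E n (n-t+1) (n-t)) * X
      = δ • ι n (E n (n-t+1) (n-t)) := by
    rw [hX, iota_comm, F1]; simp [ι]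
  have G2 : X * ι n (E n t (n-t)) - ι n (E n t (n-t)) * X = δ • ι n (E n t (n-t)) := by
    rw [hX, iota_comm, F2]; simp [ι]
  have G3 : X * ι n (E n t (t+1)) - ι n (E n t (t+1)) * X = δ • ι n (E n t (t+1)) := by
    rw [hX, iota_comm, F3]; simp [ι]
  have G4 : X * ι n (Hhat n (t+1) - Hhat n t) = ι n (Hhat n (t+1) - Hhat n t) * X := by
    have h0 : Hperp n s * (Hhat n (t+1) - Hhat n t)
        - (Hhat n (t+1) - Hhat n t) * Hperp n s = 0 := by rw [F4, sub_self]
    have := iota_comm n (Hperp n s) (Hhat n (t+1) - Hhat n t)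
    rw [h0] at this
    simp only [ι] at this ⊢
    rw [map_zero] at this
    rw [sub_eq_zero] at this
    exact this
  set A := ι n (E n (n-t+1) (n-t))
  set B := ι n (E n t (n-t))
  set H := ι n (Hhat n (t+1) - Hhat n t)
  set C := ι n (E n t (t+1))
  have Gmid : X * (H * B) - (H * B) * X = δ • (H * B) := by
    have hb : X * B = B * X + δ • B := by rw [← G2]; abel
    calc X * (H * B) - (H * B) * X = H * (X * B) - H * B * X := by rw [← mul_assoc, G4, mul_assoc]
      _ = H * (B * X + δ • B) - H * B * X := by rw [hb]
      _ = δ • (H * B) := by rw [mul_add, mul_smul_comm, ← mul_assoc]; abel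
  rw [Ehat]
  calc X * (A + H * B + C) - (A + H * B + C) * X
      = (X * A - A * X) + (X * (H * B) - (H * B) * X) + (X * C - C * X) := by noncomm_ring
    _ = δ • A + δ • (H * B) + δ • C := by rw [G1, Gmid, G3]
    _ = δ • (A + H * B + C) := by rw [smul_add, smul_add]
end
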